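/- Let M be a DFA with state set Fin n and input alphabet Fin m. For every ε > 0 there exists H₀ > 0 such that for all H ≥ H₀, all states q ∈ Fin n, and all input letters a ∈ Fin m, the second-order sigmoid network step satisfies ‖N_H(e(q), a) − e(δ(q, a))‖_∞ ≤ ε. -/

import Mathlib

/-- One-hot vector of an element of `Fin n`. -/
def oneHot {n : ℕ} (q : Fin n) : Fin n → ℝ := fun i => if i = q then 1 else 0

/-- Transition tensor of a DFA with transition function `δ`:
`W i j k = 1` if `i = δ j k` and `0` otherwise. -/
def transTensor {n m : ℕ} (δ : Fin n → Fin m → Fin n) : Fin n → Fin n → Fin m → ℝ :=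
  fun i j k => if i = δ j k then 1 else 0

/-- The parametrized sigmoid `h_H(x) = 1/(1 + exp(−H·x))`. -/
noncomputable def sigmoidH (H x : ℝ) : ℝ := 1 / (1 + Real.exp (-H * x))

/-- The second-order sigmoid network step of a DFA with sensitivity `H`:
`N_H(z, a) i = h_H((Σ_j W i j a * z j) − 1/2)`. -/
noncomputable def netStepH {n m : ℕ} (δ : Fin n → Fin m → Fin n) (H : ℝ)
    (z : Fin n → ℝ) (a : Fin m) : Fin n → ℝ :=
  fun i => sigmoidH H ((∑ j : Fin n, transTensor δ i j a * z j) - 1 / 2)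

lemma sigmoid_close_one (H : ℝ) : |sigmoidH H (1/2) - 1| ≤ Real.exp (-H/2) := by
  unfold sigmoidH
  have hpos : (0:ℝ) < 1 + Real.exp (-H * (1/2)) := by positivity
  have : 1 / (1 + Real.exp (-H * (1/2))) - 1 = -(Real.exp (-H * (1/2)) / (1 + Real.exp (-H * (1/2)))) := by
    field_simp
    ring
  rw [this, abs_neg, abs_of_nonneg (by positivity)]
  have h1 : Real.exp (-H * (1/2)) / (1 + Real.exp (-H * (1/2))) ≤ Real.exp (-H * (1/2)) := by
    apply div_le_self (le_of_lt (Real.exp_pos _))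
    nlinarith [Real.exp_pos (-H * (1/2))]
  calc _ ≤ Real.exp (-H * (1/2)) := h1
    _ = Real.exp (-H/2) := by ring_nf

lemma sigmoid_close_zero (H : ℝ) : |sigmoidH H (-(1/2)) - 0| ≤ Real.exp (-H/2) := by
  unfold sigmoidH
  rw [sub_zero]
  have hpos : (0:ℝ) < 1 + Real.exp (-H * -(1/2)) := by positivity
  rw [abs_of_nonneg (by positivity)]
  rw [div_le_iff₀ hpos]
  have h2 : Real.exp (-H/2) * Real.exp (-H * -(1/2)) = 1 := by
    rw [← Real.exp_add]; ring_nf; exact Real.exp_zero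
  nlinarith [Real.exp_pos (-H/2)]

theorem stmt_13 (n m : ℕ) (hn : 1 ≤ n) (hm : 1 ≤ m)
    (δ : Fin n → Fin m → Fin n) (q₀ : Fin n) (F : Finset (Fin n)) :
    ∀ ε > (0 : ℝ), ∃ H₀ > (0 : ℝ), ∀ H ≥ H₀, ∀ (q : Fin n) (a : Fin m),
      ‖netStepH δ H (oneHot q) a - oneHot (δ q a)‖ ≤ ε := by
  intro ε hε
  refine ⟨max 1 (-2 * Real.log ε), lt_of_lt_of_le one_pos (le_max_left _ _), ?_⟩
  intro H hH q a
  have hexp : Real.exp (-H/2) ≤ ε := by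
    have h1 : -2 * Real.log ε ≤ H := le_trans (le_max_right _ _) hH
    have : -H/2 ≤ Real.log ε := by linarith
    calc Real.exp (-H/2) ≤ Real.exp (Real.log ε) := Real.exp_le_exp.mpr this
      _ = ε := Real.exp_log hε
  rw [pi_norm_le_iff_of_nonneg (le_of_lt hε)]
  intro i
  have hsum : (∑ j : Fin n, transTensor δ i j a * oneHot q j) = transTensor δ i q a := by
    simp [oneHot, mul_ite, Finset.sum_ite_eq']
  rw [Pi.sub_apply]
  show |netStepH δ H (oneHot q) a i - oneHot (δ q a) i| ≤ ε
  have hval : netStepH δ H (oneHot q) a i = sigmoidH H (transTensor δ i q a - 1/2) := by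
    unfold netStepH; rw [hsum]
  rw [hval]
  unfold transTensor oneHot
  by_cases h : i = δ q a
  · have h1 : ((1:ℝ) - 1/2) = 1/2 := by norm_num
    simp only [h, eq_self_iff_true, if_true, h1]
    exact le_trans (sigmoid_close_one H) hexp
  · have h1 : ((0:ℝ) - 1/2) = -(1/2) := by norm_num
    simp only [if_neg h, h1, sub_zero]
    have := sigmoid_close_zero H
    rw [sub_zero] at this
    exact le_trans this hexp
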